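/- arXiv:1006.3989 — 4 statements merged into one kernel-verified Lean document; each statement's English description precedes it below -/
import Mathlib

section
/- An n-qubit state ψ ∈ ℂ^{2^n} with all amplitudes non-zero is fully separable (a tensor product of n vectors in ℂ²) if and only if it is pair product invariant: for every j ∈ {2,…,n}, writing J = 2^j, the products c_i c_{J−i−1} are equal for all i ∈ {0,…,J/2−1}, where indices are taken modulo the block structure (i.e., the condition holds within the first block of size J, equivalently all blocks by symmetry). -/
/-! Write amplitude indices in binary. Since `2 ^ j - 1 - i` is `i` with its lowest `j` bits
complemented, each tensor factor contributes the same pair of values to `ψ i * ψ (2 ^ j - 1 - i)`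
for every `i < 2 ^ j`, so product states are pair product invariant. Conversely, with all
amplitudes non-zero, invariance at levels `m` and `m + 1` gives
`ψ (2 ^ m + p) = ψ p * (ψ (2 ^ (m + 1) - 1) / ψ (2 ^ m - 1))` for `p < 2 ^ m`: setting bit `m`
multiplies the amplitude by a constant, and induction on `m` factors `ψ` qubit by qubit. -/

open Finset

section PairProduct

variable {M : Type*} [CommMonoid M]

theorem mul_apply_testBit_two_pow_sub (g : Bool → M) {i j : ℕ} (hi : i < 2 ^ j) (e : ℕ) :
    g (i.testBit e) * g ((2 ^ j - i - 1).testBit e) = g false * g (decide (e < j)) := by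
  rw [Nat.sub_sub, Nat.testBit_two_pow_sub_succ hi]
  by_cases hej : e < j
  · cases i.testBit e <;> simp [hej, mul_comm]
  · have hie : i < 2 ^ e := hi.trans_le (Nat.pow_le_pow_right two_pos (by omega))
    simp [hej, Nat.testBit_lt_two_pow hie]

def PairProdInvariant (f : ℕ → M) (j : ℕ) : Prop :=
  ∀ i < 2 ^ j, f i * f (2 ^ j - i - 1) = f 0 * f (2 ^ j - 1)

theorem pairProdInvariant_of_lt_half {f : ℕ → M} {j : ℕ}
    (h : ∀ i < 2 ^ (j - 1), f i * f (2 ^ j - i - 1) = f 0 * f (2 ^ j - 1)) :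
    PairProdInvariant f j := by
  intro i hi
  have hj : 2 ^ j ≤ 2 * 2 ^ (j - 1) := by
    rw [← pow_succ']; exact Nat.pow_le_pow_right two_pos (by omega)
  rcases lt_or_ge i (2 ^ (j - 1)) with hlt | hge
  · exact h i hlt
  · have := h (2 ^ j - i - 1) (by omega)
    rwa [show 2 ^ j - (2 ^ j - i - 1) - 1 = i by omega, mul_comm] at this

theorem pairProdInvariant_of_eq_prod {ι : Type*} (s : Finset ι) (g : ι → Bool → M) (e : ι → ℕ)
    {f : ℕ → M} {n j : ℕ} (hf : ∀ c < 2 ^ n, f c = ∏ k ∈ s, g k (c.testBit (e k)))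
    (hj : j ≤ n) : PairProdInvariant f j := by
  intro i hi
  have hjn : 2 ^ j ≤ 2 ^ n := Nat.pow_le_pow_right two_pos hj
  rw [hf i (by omega), hf _ (by omega), hf 0 (by positivity), hf _ (by omega),
    ← prod_mul_distrib, ← prod_mul_distrib]
  refine prod_congr rfl fun k _ => ?_
  rw [mul_apply_testBit_two_pow_sub _ hi, Nat.zero_testBit, Nat.testBit_two_pow_sub_one]

theorem forall_pairProdInvariant_iff {f : ℕ → M} {n : ℕ} :
    (∀ j ≤ n, PairProdInvariant f j) ↔
      ∀ j, 2 ≤ j → j ≤ n → ∀ i₁ i₂, i₁ < 2 ^ (j - 1) → i₂ < 2 ^ (j - 1) →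
        f i₁ * f (2 ^ j - i₁ - 1) = f i₂ * f (2 ^ j - i₂ - 1) := by
  constructor
  · intro h j _ hjn i₁ i₂ h₁ h₂
    have hj : 2 ^ (j - 1) ≤ 2 ^ j := Nat.pow_le_pow_right two_pos (by omega)
    rw [h j hjn i₁ (by omega), h j hjn i₂ (by omega)]
  · intro h j hjn
    refine pairProdInvariant_of_lt_half fun i hi => ?_
    rcases lt_or_ge j 2 with hj | hj
    · have : 2 ^ (j - 1) = 1 := by rw [show j - 1 = 0 by omega, pow_zero]
      rw [show i = 0 by omega, Nat.sub_zero]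
    · simpa using h j hj hjn i 0 hi (by positivity)

end PairProduct

section Separability

variable {K : Type*} [Field K]

theorem PairProdInvariant.apply_two_pow_add {f : ℕ → K} {m p : ℕ}
    (hf : ∀ c < 2 ^ (m + 1), f c ≠ 0) (hm : PairProdInvariant f m)
    (hm' : PairProdInvariant f (m + 1)) (hp : p < 2 ^ m) :
    f (2 ^ m + p) = f p * (f (2 ^ (m + 1) - 1) / f (2 ^ m - 1)) := by
  have h2m : 2 ^ (m + 1) = 2 * 2 ^ m := pow_succ' 2 m
  have hlow := hm p hp
  have hhigh := hm' (2 ^ m - p - 1) (by omega)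
  rw [show 2 ^ (m + 1) - (2 ^ m - p - 1) - 1 = 2 ^ m + p by omega] at hhigh
  have hq : f (2 ^ m - p - 1) ≠ 0 := hf _ (by omega)
  have hr : f (2 ^ m - 1) ≠ 0 := hf _ (by omega)
  rw [mul_div_assoc', eq_div_iff hr]
  exact mul_left_cancel₀ hq (by linear_combination f (2 ^ m - 1) * hhigh - f (2 ^ (m + 1) - 1) * hlow)

theorem eq_mul_prod_of_pairProdInvariant {f : ℕ → K} {n : ℕ} (hf : ∀ c < 2 ^ n, f c ≠ 0)
    (h : ∀ j ≤ n, PairProdInvariant f j) (c : ℕ) (hc : c < 2 ^ n) :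
    f c = f 0 * ∏ e ∈ range n,
      if c.testBit e then f (2 ^ (e + 1) - 1) / f (2 ^ e - 1) else 1 := by
  induction n generalizing c with
  | zero => simp [show c = 0 by simpa using hc]
  | succ m ih =>
    have hm : 2 ^ (m + 1) = 2 * 2 ^ m := pow_succ' 2 m
    have ih' := ih (fun c hc => hf c (by omega)) (fun j hj => h j (by omega))
    rw [prod_range_succ, ← mul_assoc]
    rcases lt_or_ge c (2 ^ m) with hlt | hge
    · rw [Nat.testBit_lt_two_pow hlt, if_neg Bool.false_ne_true, mul_one, ih' c hlt]
    · obtain ⟨p, rfl⟩ := Nat.exists_eq_add_of_le hge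
      have hp : p < 2 ^ m := by omega
      rw [Nat.testBit_two_pow_add_eq, Nat.testBit_lt_two_pow hp, Bool.not_false, if_pos rfl,
        (h m (by omega)).apply_two_pow_add hf (h (m + 1) le_rfl) hp, ih' p hp]
      congr 2
      exact prod_congr rfl fun e he => by rw [Nat.testBit_two_pow_add_gt (mem_range.1 he)]

end Separability

theorem finTwoEquiv_symm_testBit (c e : ℕ) :
    finTwoEquiv.symm (c.testBit e) = ⟨c / 2 ^ e % 2, Nat.mod_lt _ two_pos⟩ := by
  rw [Equiv.symm_apply_eq, Nat.testBit_eq_decide_div_mod_eq]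
  rcases Nat.mod_two_eq_zero_or_one (c / 2 ^ e) with h | h <;> simp [finTwoEquiv, h]

theorem exists_fin_prod_eq_mul_prod {M : Type*} [CommMonoid M] {n : ℕ} (hn : 1 ≤ n) (a : M)
    (w : ℕ → Bool → M) :
    ∃ v : Fin n → Fin 2 → M, ∀ c : ℕ,
      ∏ j : Fin n, v j ⟨c / 2 ^ (n - 1 - j.val) % 2, Nat.mod_lt _ two_pos⟩ =
        a * ∏ e ∈ range n, w e (c.testBit e) := by
  refine ⟨fun j b => (if j.val = n - 1 then a else 1) * w (n - 1 - j) (finTwoEquiv b), fun c => ?_⟩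
  simp only [← finTwoEquiv_symm_testBit, Equiv.apply_symm_apply]
  rw [Fin.prod_univ_eq_prod_range (fun j => (if j = n - 1 then a else 1) *
    w (n - 1 - j) (c.testBit (n - 1 - j))), prod_mul_distrib, prod_ite_eq',
    if_pos (mem_range.2 (by omega)), prod_range_reflect (fun e => w e (c.testBit e))]


/-- An `n`-qubit state with all amplitudes non-zero is fully separable iff it is
pair product invariant: for every `j ∈ {2,…,n}`, with `J = 2^j`, the products
`c_i c_{J-i-1}` agree for all `i < J/2` (within the first block of size `J`). -/
theorem stmt9 (n : ℕ) (hn : 1 ≤ n) (ψ : Fin (2 ^ n) → ℂ) (hψ : ∀ i, ψ i ≠ 0) :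
    (∃ v : Fin n → Fin 2 → ℂ, ∀ c : Fin (2 ^ n),
        ψ c = ∏ j : Fin n,
          v j ⟨c.val / 2 ^ (n - 1 - j.val) % 2, Nat.mod_lt _ (by norm_num)⟩) ↔
    (∀ j, 2 ≤ j → ∀ hj : j ≤ n, ∀ i₁ i₂ : ℕ,
      ∀ h₁ : i₁ < 2 ^ (j - 1), ∀ h₂ : i₂ < 2 ^ (j - 1),
        ψ ⟨i₁, by
            have h := Nat.pow_le_pow_right (by norm_num : 1 ≤ 2) (by omega : j - 1 ≤ n)
            omega⟩ *
          ψ ⟨2 ^ j - i₁ - 1, by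
            have h := Nat.pow_le_pow_right (by norm_num : 1 ≤ 2) hj
            have h0 : 0 < 2 ^ j := by positivity
            omega⟩ =
        ψ ⟨i₂, by
            have h := Nat.pow_le_pow_right (by norm_num : 1 ≤ 2) (by omega : j - 1 ≤ n)
            omega⟩ *
          ψ ⟨2 ^ j - i₂ - 1, by
            have h := Nat.pow_le_pow_right (by norm_num : 1 ≤ 2) hj
            have h0 : 0 < 2 ^ j := by positivity
            omega⟩) := by
  set f : ℕ → ℂ := fun c => if h : c < 2 ^ n then ψ ⟨c, h⟩ else 0
  have hψf : ∀ c : Fin (2 ^ n), ψ c = f c := fun c => by simp [f]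
  have hf : ∀ c < 2 ^ n, f c ≠ 0 := fun c hc => by simpa [f, hc] using hψ ⟨c, hc⟩
  simp only [hψf, ← forall_pairProdInvariant_iff]
  constructor
  · rintro ⟨v, hv⟩ j hj
    refine pairProdInvariant_of_eq_prod univ (fun j => v j ∘ finTwoEquiv.symm)
      (fun j : Fin n => n - 1 - j) (fun c hc => ?_) hj
    simpa [finTwoEquiv_symm_testBit] using hv ⟨c, hc⟩
  · intro h
    obtain ⟨v, hv⟩ := exists_fin_prod_eq_mul_prod hn (f 0)
      (fun e b => if b then f (2 ^ (e + 1) - 1) / f (2 ^ e - 1) else 1)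
    exact ⟨v, fun c => (eq_mul_prod_of_pairProdInvariant hf h c c.isLt).trans (hv c).symm⟩
end

section
/- For a separable input state ψ = ⊗_{j=1}^n (α_j, β_j) ∈ ℂ^{2^n}, the c-th amplitude of the transformed state F_N ψ equals (1/√N) Π_{j=1}^n (α_j + e^{πi c/2^{j−1}} β_j), where N = 2^n. -/
private lemma sum_range_two_mul (m : ℕ) (f : ℕ → ℂ) :
    ∑ a ∈ Finset.range (2 * m), f a
      = ∑ b ∈ Finset.range m, (f (2 * b) + f (2 * b + 1)) := by
  induction m with
  | zero => simp
  | succ m ih =>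
    have h : 2 * (m + 1) = (2 * m + 1) + 1 := by ring
    rw [h, Finset.sum_range_succ, Finset.sum_range_succ, ih, Finset.sum_range_succ]
    ring

private lemma key (c : ℕ) (α β : ℕ → ℂ) : ∀ n : ℕ,
    ∑ a ∈ Finset.range (2 ^ n),
        Complex.exp (2 * Real.pi * Complex.I * (a : ℂ) * (c : ℂ) / (2 ^ n : ℂ)) *
          ∏ j ∈ Finset.Icc 1 n, (if a / 2 ^ (n - j) % 2 = 0 then α j else β j) =
      ∏ j ∈ Finset.Icc 1 n,
        (α j + Complex.exp (Real.pi * Complex.I * (c : ℂ) / (2 ^ (j - 1) : ℂ)) * β j) := by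
  intro n
  induction n with
  | zero => simp
  | succ n ih =>
    have h2n : (2 : ℂ) ^ n ≠ 0 := pow_ne_zero n two_ne_zero
    have h2m : 2 ^ (n + 1) = 2 * 2 ^ n := by ring
    rw [h2m, sum_range_two_mul]
    have hbit : ∀ b ε j : ℕ, ε < 2 → j ∈ Finset.Icc 1 n →
        (2 * b + ε) / 2 ^ (n + 1 - j) % 2 = b / 2 ^ (n - j) % 2 := by
      intro b ε j hε hj
      simp only [Finset.mem_Icc] at hj
      have hk : n + 1 - j = (n - j) + 1 := by omega
      rw [hk, pow_succ', ← Nat.div_div_eq_div_mul, Nat.mul_add_div two_pos,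
        Nat.div_eq_of_lt hε, Nat.add_zero]
    have hprod : ∀ b ε : ℕ, ε < 2 →
        (∏ j ∈ Finset.Icc 1 (n + 1),
            (if (2 * b + ε) / 2 ^ (n + 1 - j) % 2 = 0 then α j else β j)) =
          (∏ j ∈ Finset.Icc 1 n, (if b / 2 ^ (n - j) % 2 = 0 then α j else β j)) *
            (if ε = 0 then α (n + 1) else β (n + 1)) := by
      intro b ε hε
      rw [Finset.prod_Icc_succ_top (Nat.le_add_left 1 n)]
      congr 1
      · exact Finset.prod_congr rfl fun j hj => by rw [hbit b ε j hε hj]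
      · have : (2 * b + ε) / 2 ^ (n + 1 - (n + 1)) % 2 = ε := by
          simp [Nat.mul_add_mod, Nat.mod_eq_of_lt hε]
        rw [this]
    have hexp0 : ∀ b : ℕ,
        Complex.exp (2 * Real.pi * Complex.I * ((2 * b : ℕ) : ℂ) * (c : ℂ) / (2 ^ (n + 1) : ℂ))
          = Complex.exp (2 * Real.pi * Complex.I * (b : ℂ) * (c : ℂ) / (2 ^ n : ℂ)) := by
      intro b
      congr 1
      push_cast
      rw [pow_succ]
      field_simp
    have hexp1 : ∀ b : ℕ,
        Complex.exp (2 * Real.pi * Complex.I * ((2 * b + 1 : ℕ) : ℂ) * (c : ℂ) / (2 ^ (n + 1) : ℂ))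
          = Complex.exp (2 * Real.pi * Complex.I * (b : ℂ) * (c : ℂ) / (2 ^ n : ℂ)) *
            Complex.exp (Real.pi * Complex.I * (c : ℂ) / (2 ^ n : ℂ)) := by
      intro b
      rw [← Complex.exp_add]
      congr 1
      push_cast
      rw [pow_succ]
      field_simp
    have step : ∀ b : ℕ,
        (Complex.exp (2 * Real.pi * Complex.I * ((2 * b : ℕ) : ℂ) * (c : ℂ) / (2 ^ (n + 1) : ℂ)) *
            ∏ j ∈ Finset.Icc 1 (n + 1),
              (if (2 * b) / 2 ^ (n + 1 - j) % 2 = 0 then α j else β j)) +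
          (Complex.exp (2 * Real.pi * Complex.I * ((2 * b + 1 : ℕ) : ℂ) * (c : ℂ) / (2 ^ (n + 1) : ℂ)) *
            ∏ j ∈ Finset.Icc 1 (n + 1),
              (if (2 * b + 1) / 2 ^ (n + 1 - j) % 2 = 0 then α j else β j)) =
        (Complex.exp (2 * Real.pi * Complex.I * (b : ℂ) * (c : ℂ) / (2 ^ n : ℂ)) *
            ∏ j ∈ Finset.Icc 1 n, (if b / 2 ^ (n - j) % 2 = 0 then α j else β j)) *
          (α (n + 1) + Complex.exp (Real.pi * Complex.I * (c : ℂ) / (2 ^ n : ℂ)) * β (n + 1)) := by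
      intro b
      have e0 := hprod b 0 (by norm_num)
      have e1 := hprod b 1 (by norm_num)
      norm_num at e0 e1
      rw [e0, e1, hexp0, hexp1]
      ring
    calc ∑ b ∈ Finset.range (2 ^ n), _ = _ := Finset.sum_congr rfl fun b _ => step b
      _ = (∑ b ∈ Finset.range (2 ^ n),
            Complex.exp (2 * Real.pi * Complex.I * (b : ℂ) * (c : ℂ) / (2 ^ n : ℂ)) *
              ∏ j ∈ Finset.Icc 1 n, (if b / 2 ^ (n - j) % 2 = 0 then α j else β j)) *
          (α (n + 1) + Complex.exp (Real.pi * Complex.I * (c : ℂ) / (2 ^ n : ℂ)) * β (n + 1)) := by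
        rw [Finset.sum_mul]
      _ = _ := by
        rw [ih, Finset.prod_Icc_succ_top (Nat.le_add_left 1 n)]
        norm_num

/-- For a separable input `ψ = ⊗_{j=1}^n (α_j, β_j)` (binary indexing, most significant
bit first), the `c`-th amplitude of `F_N ψ` equals
`(1/√N) Π_{j=1}^n (α_j + e^{πi c/2^{j-1}} β_j)`, where `N = 2^n`. -/
theorem stmt10 (n : ℕ) (hn : 1 ≤ n) (α β : ℕ → ℂ) :
    ∀ c : ℕ, c < 2 ^ n →
      ((Real.sqrt (2 ^ n) : ℂ))⁻¹ *
          ∑ a ∈ Finset.range (2 ^ n),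
            Complex.exp (2 * Real.pi * Complex.I * (a : ℂ) * (c : ℂ) / (2 ^ n : ℂ)) *
              ∏ j ∈ Finset.Icc 1 n, (if a / 2 ^ (n - j) % 2 = 0 then α j else β j) =
        ((Real.sqrt (2 ^ n) : ℂ))⁻¹ *
          ∏ j ∈ Finset.Icc 1 n,
            (α j + Complex.exp (Real.pi * Complex.I * (c : ℂ) / (2 ^ (j - 1) : ℂ)) * β j) := by
  intro c _
  rw [key c α β n]
end

section
/- If ψ = ⊗_{j=1}^n (α_j, β_j) satisfies the conditions of the separability criterion with parameter k (all qubits nonzero), then among the first 2^k amplitudes of ψ̂ = F_{2^n} ψ, exactly one is non-zero, namely f̂(c') with c' = Σ_{l=1}^k a_l 2^{l−1}; moreover the non-zero amplitudes of ψ̂ occur at indices c ≡ c' (mod 2^k). -/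
private lemma sum_pow_bound (a : ℕ → ℕ) (k : ℕ) (ha : ∀ l ∈ Finset.Icc 1 k, a l ≤ 1) :
    ∑ l ∈ Finset.Icc 1 k, a l * 2 ^ (l - 1) < 2 ^ k := by
  induction k with
  | zero => simp
  | succ k ih =>
    rw [Finset.sum_Icc_succ_top (by omega)]
    have h1 := ih (fun l hl => ha l (by simp only [Finset.mem_Icc] at hl ⊢; omega))
    have h2 := ha (k+1) (by simp)
    have hb : a (k+1) * 2 ^ (k+1-1) ≤ 2 ^ k := by
      simpa using Nat.mul_le_mul_right (2^k) h2
    have hp : 2 ^ (k+1) = 2 ^ k + 2 ^ k := by rw [pow_succ]; ring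
    omega

private lemma sum_div_eq (a : ℕ → ℕ) (j : ℕ) :
    ∑ l ∈ Finset.Icc 1 j, (a l : ℂ) / (2 ^ (j - l) : ℂ) =
      ((∑ l ∈ Finset.Icc 1 j, a l * 2 ^ (l - 1) : ℕ) : ℂ) / (2 ^ (j - 1) : ℂ) := by
  push_cast
  rw [Finset.sum_div]
  refine Finset.sum_congr rfl fun l hl => ?_
  simp only [Finset.mem_Icc] at hl
  rw [div_eq_div_iff (pow_ne_zero _ two_ne_zero) (pow_ne_zero _ two_ne_zero), mul_assoc, ← pow_add]
  congr 2
  omega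

private lemma sum_div_eq' (a : ℕ → ℕ) (k : ℕ) :
    ∑ l ∈ Finset.Icc 1 k, (a l : ℂ) / (2 ^ (k - l + 1) : ℂ) =
      ((∑ l ∈ Finset.Icc 1 k, a l * 2 ^ (l - 1) : ℕ) : ℂ) / (2 ^ k : ℂ) := by
  push_cast
  rw [Finset.sum_div]
  refine Finset.sum_congr rfl fun l hl => ?_
  simp only [Finset.mem_Icc] at hl
  rw [div_eq_div_iff (pow_ne_zero _ two_ne_zero) (pow_ne_zero _ two_ne_zero), mul_assoc, ← pow_add]
  congr 2
  omega

private lemma exp_eq_of_dvd (c d j : ℕ) (hj : 1 ≤ j) (h : (2 ^ j : ℤ) ∣ (c : ℤ) - d) :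
    Complex.exp (Real.pi * Complex.I * (c : ℂ) / (2 ^ (j - 1) : ℂ)) =
      Complex.exp (Real.pi * Complex.I * (d : ℂ) / (2 ^ (j - 1) : ℂ)) := by
  obtain ⟨m, hm⟩ := h
  have hz : (c : ℤ) = d + 2 ^ j * m := by linarith
  have hc : (c : ℂ) = d + 2 ^ j * m := by exact_mod_cast hz
  have h2 : (2 : ℂ) ^ j = 2 * 2 ^ (j - 1) := by
    conv_lhs => rw [show j = (j-1)+1 from by omega]
    rw [pow_succ]; ring
  have hne : (2 : ℂ) ^ (j-1) ≠ 0 := pow_ne_zero _ two_ne_zero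
  have key : Real.pi * Complex.I * (c : ℂ) / (2 ^ (j - 1) : ℂ)
      = Real.pi * Complex.I * (d : ℂ) / (2 ^ (j - 1) : ℂ) + m * (2 * Real.pi * Complex.I) := by
    rw [hc, h2]; field_simp
  rw [key, Complex.exp_add, Complex.exp_int_mul_two_pi_mul_I, mul_one]

private lemma exp_add_pow_neg (c j : ℕ) (hj : 1 ≤ j) :
    Complex.exp (Real.pi * Complex.I * ((c + 2 ^ (j-1) : ℕ) : ℂ) / (2 ^ (j - 1) : ℂ)) =
      - Complex.exp (Real.pi * Complex.I * (c : ℂ) / (2 ^ (j - 1) : ℂ)) := by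
  have hne : (2 : ℂ) ^ (j-1) ≠ 0 := pow_ne_zero _ two_ne_zero
  have key : Real.pi * Complex.I * ((c + 2 ^ (j-1) : ℕ) : ℂ) / (2 ^ (j - 1) : ℂ)
      = Real.pi * Complex.I * (c : ℂ) / (2 ^ (j - 1) : ℂ) + Real.pi * Complex.I := by
    push_cast; field_simp
  rw [key, Complex.exp_add, Complex.exp_pi_mul_I]
  ring

private lemma exp_shift (c q k : ℕ) :
    Complex.exp (Real.pi * Complex.I * ((2 ^ k * q + c : ℕ) : ℂ) / (2 ^ k : ℂ)) =
      (-1) ^ q * Complex.exp (Real.pi * Complex.I * (c : ℂ) / (2 ^ k : ℂ)) := by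
  have hne : (2 : ℂ) ^ k ≠ 0 := pow_ne_zero _ two_ne_zero
  have key : Real.pi * Complex.I * ((2 ^ k * q + c : ℕ) : ℂ) / (2 ^ k : ℂ)
      = (q : ℂ) * (Real.pi * Complex.I) + Real.pi * Complex.I * (c : ℂ) / (2 ^ k : ℂ) := by
    push_cast; field_simp
  rw [key, Complex.exp_add, Complex.exp_nat_mul, Complex.exp_pi_mul_I]

/-- If `⊗_j (α_j, β_j)` satisfies the separability criterion with parameter `k` and bits
`a_1,…,a_k`, then among the first `2^k` amplitudes of the transformed state exactly the one
at `c' = Σ_{l=1}^k a_l 2^{l-1}` is non-zero, and overall the non-zero amplitudes are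
exactly those with `c ≡ c' (mod 2^k)`. -/
theorem stmt16 (n k : ℕ) (hn : 1 ≤ n) (hk : k ≤ n) (α β : ℕ → ℂ) (a : ℕ → ℕ)
    (ha : ∀ l ∈ Finset.Icc 1 k, a l ≤ 1)
    (hq : ∀ j ∈ Finset.Icc 1 n, ¬(α j = 0 ∧ β j = 0))
    (h1 : ∀ j ∈ Finset.Icc 1 k,
      α j = Complex.exp (Real.pi * Complex.I *
          ∑ l ∈ Finset.Icc 1 j, (a l : ℂ) / (2 ^ (j - l) : ℂ)) * β j)
    (h2 : k < n →
      α (k + 1) ≠ Complex.exp (Real.pi * Complex.I *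
          ∑ l ∈ Finset.Icc 1 k, (a l : ℂ) / (2 ^ (k - l + 1) : ℂ)) * β (k + 1) ∧
      α (k + 1) ≠ -Complex.exp (Real.pi * Complex.I *
          ∑ l ∈ Finset.Icc 1 k, (a l : ℂ) / (2 ^ (k - l + 1) : ℂ)) * β (k + 1))
    (h3 : ∀ j : ℕ, k + 1 < j → j ≤ n → α j * β j = 0) :
    (∀ c : ℕ, c < 2 ^ k →
      (((Real.sqrt (2 ^ n) : ℂ))⁻¹ *
          ∏ j ∈ Finset.Icc 1 n,
            (α j + Complex.exp (Real.pi * Complex.I * (c : ℂ) / (2 ^ (j - 1) : ℂ)) * β j) ≠ 0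
        ↔ c = ∑ l ∈ Finset.Icc 1 k, a l * 2 ^ (l - 1))) ∧
    (∀ c : ℕ, c < 2 ^ n →
      (((Real.sqrt (2 ^ n) : ℂ))⁻¹ *
          ∏ j ∈ Finset.Icc 1 n,
            (α j + Complex.exp (Real.pi * Complex.I * (c : ℂ) / (2 ^ (j - 1) : ℂ)) * β j) ≠ 0
        ↔ c % 2 ^ k = ∑ l ∈ Finset.Icc 1 k, a l * 2 ^ (l - 1))) := by
  -- notation
  set S : ℕ → ℕ := fun j => ∑ l ∈ Finset.Icc 1 j, a l * 2 ^ (l - 1) with hS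
  have hS0 : S 0 = 0 := by simp [hS]
  have hSsucc : ∀ j, S (j + 1) = S j + a (j+1) * 2 ^ j := by
    intro j
    simp only [hS]
    rw [Finset.sum_Icc_succ_top (by omega)]
    simp
  have hc'lt : S k < 2 ^ k := sum_pow_bound a k ha
  have hsqrt : ((Real.sqrt (2 ^ n) : ℝ) : ℂ) ≠ 0 := by
    simp only [ne_eq, Complex.ofReal_eq_zero]
    positivity
  have hβ : ∀ j ∈ Finset.Icc 1 k, β j ≠ 0 := by
    intro j hj hb
    have hjn : j ∈ Finset.Icc 1 n := by
      simp only [Finset.mem_Icc] at hj ⊢; omega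
    exact hq j hjn ⟨by rw [h1 j hj, hb, mul_zero], hb⟩
  -- factor rewrite for j ≤ k
  have hfac : ∀ j ∈ Finset.Icc 1 k, ∀ c : ℕ,
      α j + Complex.exp (Real.pi * Complex.I * (c : ℂ) / (2 ^ (j - 1) : ℂ)) * β j
        = β j * (Complex.exp (Real.pi * Complex.I * ((S j : ℕ) : ℂ) / (2 ^ (j - 1) : ℂ))
            + Complex.exp (Real.pi * Complex.I * (c : ℂ) / (2 ^ (j - 1) : ℂ))) := by
    intro j hj c
    rw [h1 j hj, sum_div_eq a j, ← mul_div_assoc]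
    ring
  -- (a) nonvanishing of factor j ≤ k when c ≡ S j mod 2^j
  have hfacA : ∀ j ∈ Finset.Icc 1 k, ∀ c : ℕ, (2 ^ j : ℤ) ∣ (c : ℤ) - S j →
      α j + Complex.exp (Real.pi * Complex.I * (c : ℂ) / (2 ^ (j - 1) : ℂ)) * β j ≠ 0 := by
    intro j hj c hdvd
    have hj1 : 1 ≤ j := (Finset.mem_Icc.mp hj).1
    rw [hfac j hj c, exp_eq_of_dvd c (S j) j hj1 hdvd, ← two_mul]
    exact mul_ne_zero (hβ j hj) (mul_ne_zero two_ne_zero (Complex.exp_ne_zero _))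
  -- (b) vanishing of factor j ≤ k when c ≡ S j + 2^(j-1) mod 2^j
  have hfacB : ∀ j ∈ Finset.Icc 1 k, ∀ c : ℕ,
      (2 ^ j : ℤ) ∣ (c : ℤ) - S j - 2 ^ (j - 1) →
      α j + Complex.exp (Real.pi * Complex.I * (c : ℂ) / (2 ^ (j - 1) : ℂ)) * β j = 0 := by
    intro j hj c hdvd
    have hj1 : 1 ≤ j := (Finset.mem_Icc.mp hj).1
    have hd2 : (2 ^ j : ℤ) ∣ (c : ℤ) - ((S j + 2 ^ (j - 1) : ℕ) : ℤ) := by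
      push_cast
      convert hdvd using 1
      ring
    rw [hfac j hj c, exp_eq_of_dvd c (S j + 2 ^ (j-1)) j hj1 hd2,
      exp_add_pow_neg (S j) j hj1]
    ring
  -- main equivalence for every c
  have main : ∀ c : ℕ,
      (((Real.sqrt (2 ^ n) : ℝ) : ℂ))⁻¹ *
          ∏ j ∈ Finset.Icc 1 n,
            (α j + Complex.exp (Real.pi * Complex.I * (c : ℂ) / (2 ^ (j - 1) : ℂ)) * β j) ≠ 0
        ↔ c % 2 ^ k = S k := by
    intro c
    constructor
    · intro h
      have hprod : ∀ j ∈ Finset.Icc 1 n,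
          α j + Complex.exp (Real.pi * Complex.I * (c : ℂ) / (2 ^ (j - 1) : ℂ)) * β j ≠ 0 := by
        have := (mul_ne_zero_iff.mp h).2
        exact Finset.prod_ne_zero_iff.mp this
      have key : ∀ j, j ≤ k → (2 ^ j : ℤ) ∣ (c : ℤ) - S j := by
        intro j
        induction j with
        | zero => intro _; simpa using one_dvd ((c : ℤ) - S 0)
        | succ j ih =>
          intro hjk
          obtain ⟨m, hm⟩ := ih (by omega)
          rcases Int.even_or_odd (m - a (j+1)) with ⟨t, ht⟩ | ⟨t, ht⟩
          · refine ⟨t, ?_⟩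
            have := hSsucc j
            push_cast [this]
            have hp : (2 : ℤ) ^ (j+1) = 2 ^ j * 2 := pow_succ 2 j
            linear_combination hm + (2:ℤ)^j * ht + t * hp
          · exfalso
            have hmem : (j+1) ∈ Finset.Icc 1 k := by simp only [Finset.mem_Icc]; omega
            have hdvd : (2 ^ (j+1) : ℤ) ∣ (c : ℤ) - S (j+1) - 2 ^ ((j+1) - 1) := by
              refine ⟨t, ?_⟩
              have := hSsucc j
              push_cast [this]
              have hp : (2 : ℤ) ^ (j+1) = 2 ^ j * 2 := pow_succ 2 j
              linear_combination hm + (2:ℤ)^j * ht + t * hp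
            exact hprod (j+1) (by simp only [Finset.mem_Icc] at hmem ⊢; omega)
              (hfacB (j+1) hmem c hdvd)
      have hmodeq : S k ≡ c [MOD 2 ^ k] :=
        (Nat.modEq_iff_dvd).mpr (by exact_mod_cast key k le_rfl)
      calc c % 2 ^ k = S k % 2 ^ k := hmodeq.symm
        _ = S k := Nat.mod_eq_of_lt hc'lt
    · intro hmod
      refine mul_ne_zero (inv_ne_zero hsqrt) (Finset.prod_ne_zero_iff.mpr ?_)
      intro j hj
      simp only [Finset.mem_Icc] at hj
      have hck : (2 ^ k : ℤ) ∣ (c : ℤ) - S k := by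
        have hme : S k ≡ c [MOD 2 ^ k] := by
          show S k % 2 ^ k = c % 2 ^ k
          rw [hmod, Nat.mod_eq_of_lt hc'lt]
        exact_mod_cast (Nat.modEq_iff_dvd).mp hme
      rcases lt_trichotomy j (k+1) with hjk | hjk | hjk
      · -- j ≤ k
        have hjk' : j ≤ k := by omega
        have hmem : j ∈ Finset.Icc 1 k := by simp only [Finset.mem_Icc]; omega
        have hsplit : ∃ u : ℕ, S k = S j + 2 ^ j * u := by
          have hIoc : ∀ x : ℕ, Finset.Icc 1 x = Finset.Ioc 0 x := by
            intro x; ext m; simp [Nat.lt_iff_add_one_le]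
          have hsp : S k = S j + ∑ l ∈ Finset.Ioc j k, a l * 2 ^ (l - 1) := by
            simp only [hS, hIoc]
            rw [← Finset.sum_Ioc_consecutive _ (Nat.zero_le j) hjk']
          have hdT : (2 ^ j : ℕ) ∣ ∑ l ∈ Finset.Ioc j k, a l * 2 ^ (l - 1) := by
            refine Finset.dvd_sum fun l hl => ?_
            simp only [Finset.mem_Ioc] at hl
            exact Dvd.dvd.mul_left (pow_dvd_pow 2 (by omega)) _
          obtain ⟨u, hu⟩ := hdT
          exact ⟨u, by rw [hsp, hu]⟩
        obtain ⟨u, hu⟩ := hsplit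
        have hdvd : (2 ^ j : ℤ) ∣ (c : ℤ) - S j := by
          obtain ⟨v, hv⟩ := hck
          refine ⟨2 ^ (k - j) * v + u, ?_⟩
          have hu' : (S k : ℤ) = S j + 2 ^ j * u := by exact_mod_cast hu
          have hpk : (2 : ℤ) ^ k = 2 ^ j * 2 ^ (k - j) := by
            rw [← pow_add]; congr 1; omega
          linear_combination hv + hu' + v * hpk
        exact hfacA j hmem c hdvd
      · -- j = k + 1
        subst hjk
        simp only [Nat.add_sub_cancel]
        have hkn : k < n := by omega
        obtain ⟨hA, hB⟩ := h2 hkn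
        rw [sum_div_eq' a k] at hA hB
        have hc : c = 2 ^ k * (c / 2^k) + S k := by
          conv_lhs => rw [← Nat.div_add_mod c (2^k)]
          rw [hmod]
        rw [hc, exp_shift (S k) (c / 2^k) k]
        rcases Nat.even_or_odd (c / 2^k) with he | ho
        · rw [he.neg_one_pow, one_mul]
          intro hzero
          apply hB
          rw [← mul_div_assoc]
          have : α (k+1) = -(Complex.exp (Real.pi * Complex.I * ((S k : ℕ) : ℂ) / (2 ^ k : ℂ)) * β (k+1)) := by
            linear_combination hzero
          rw [this]; ring
        · rw [ho.neg_one_pow]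
          intro hzero
          apply hA
          rw [← mul_div_assoc]
          have : α (k+1) = Complex.exp (Real.pi * Complex.I * ((S k : ℕ) : ℂ) / (2 ^ k : ℂ)) * β (k+1) := by
            linear_combination hzero
          rw [this]
      · -- j > k + 1
        have hab := h3 j hjk hj.2
        have hnb := hq j (by simp only [Finset.mem_Icc]; omega)
        rcases mul_eq_zero.mp hab with hA | hB
        · have hbne : β j ≠ 0 := fun hb => hnb ⟨hA, hb⟩
          rw [hA, zero_add]
          exact mul_ne_zero (Complex.exp_ne_zero _) hbne
        · have hane : α j ≠ 0 := fun haz => hnb ⟨haz, hB⟩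
          rw [hB, mul_zero, add_zero]
          exact hane
  constructor
  · intro c hc
    rw [main c, Nat.mod_eq_of_lt hc]
  · intro c _
    exact main c
end

section
/- For n qubits (α_j, β_j) with α_j β_j = 0 and (α_j, β_j) ≠ (0,0) for all j in a set S ⊆ {1,…,n}, and any integer c, Π_{j∈S}(α_j + e^{πi c/2^{j−1}} β_j) = e^{2πi c r} Π_{j∈S}(α_j + β_j), where r = Σ_{j∈S, α_j = 0} 2^{−j}. -/
open scoped Classical

/-- For qubits with exactly one of `α_j, β_j` zero (for `j` in a set `S ⊆ {1,…,n}`) and any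
integer `c`: `Π_{j∈S}(α_j + e^{πi c/2^{j−1}} β_j) = e^{2πi c r} Π_{j∈S}(α_j + β_j)` with
`r = Σ_{j∈S, α_j=0} 2^{−j}`. -/
theorem stmt18 (n : ℕ) (α β : ℕ → ℂ) (S : Finset ℕ) (hS : S ⊆ Finset.Icc 1 n)
    (h0 : ∀ j ∈ S, α j * β j = 0) (h1 : ∀ j ∈ S, ¬(α j = 0 ∧ β j = 0)) (c : ℤ) :
    ∏ j ∈ S, (α j + Complex.exp (Real.pi * Complex.I * (c : ℂ) / (2 ^ (j - 1) : ℂ)) * β j) =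
      Complex.exp (2 * Real.pi * Complex.I * (c : ℂ) *
          ((∑ j ∈ S, if α j = 0 then ((2 : ℝ) ^ j)⁻¹ else 0 : ℝ) : ℂ)) *
        ∏ j ∈ S, (α j + β j) := by
  have hexp : Complex.exp (2 * Real.pi * Complex.I * (c : ℂ) *
      ((∑ j ∈ S, if α j = 0 then ((2 : ℝ) ^ j)⁻¹ else 0 : ℝ) : ℂ)) =
      ∏ j ∈ S, Complex.exp (2 * Real.pi * Complex.I * (c : ℂ) *
        ((if α j = 0 then ((2 : ℝ) ^ j)⁻¹ else 0 : ℝ) : ℂ)) := by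
    rw [← Complex.exp_sum]
    congr 1
    push_cast
    rw [Finset.mul_sum]
  rw [hexp, ← Finset.prod_mul_distrib]
  apply Finset.prod_congr rfl
  intro j hj
  have hj1 : 1 ≤ j := (Finset.mem_Icc.mp (hS hj)).1
  rcases mul_eq_zero.mp (h0 j hj) with hα | hβ
  · have hβ : β j ≠ 0 := fun h => h1 j hj ⟨hα, h⟩
    rw [hα, if_pos rfl, zero_add, zero_add]
    have h2 : (2:ℂ)^j = 2^(j-1) * 2 := by
      rw [← pow_succ]
      congr 1
      omega
    have h2ne : (2:ℂ)^(j-1) ≠ 0 := pow_ne_zero _ two_ne_zero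
    rw [mul_comm (Complex.exp _) (β j)]
    rw [mul_comm (Complex.exp _) (β j)] -- no-op? careful
    congr 1
    push_cast
    rw [h2]
    field_simp
  · have hα : α j ≠ 0 := fun h => h1 j hj ⟨h, hβ⟩
    rw [hβ, if_neg hα]
    simp
end
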